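/- arXiv:2204.01908 — 5 statements merged into one kernel-verified Lean document; each statement's English description precedes it below -/
import Mathlib

section
/- Let m ≥ 3 and let S_m be the graph consisting of a centre vertex u together with m pairwise-disjoint one-way infinite rays, where u is adjacent to the initial vertex of each ray. Then in the ordinary firefighter game one firefighter can contain a fire starting at u, i.e. f(S_m, u) = 1, while in the distance-restricted game f_d(S_m, u) = m for every integer d ≥ 1. -/
/- Distance-restricted firefighter game (Burgess, Marcoux, Pike, arXiv:2204.01908).

At time 0 a fire breaks out at the set `F` of vertices and each firefighter is placed on
(protects) a vertex not in `F`.  At each subsequent time step the fire spreads to every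
unburnt, unprotected neighbour of a burning vertex, and then each firefighter moves to a
vertex at distance at most `d` from its current vertex in the subgraph induced by the
unburnt vertices (i.e. along a walk of length ≤ `d` through unburnt vertices).
Occupied vertices are protected forever.  The fire is contained if the burnt set
stabilizes after finitely many steps. -/

namespace Firefight

variable {V : Type*}

/-- There is a walk in `G` from `u` to `v` of length at most `d` all of whose vertices
(including the endpoints) lie in `S`. -/
def ReachWithin (G : SimpleGraph V) (S : Set V) (d : ℕ) (u v : V) : Prop :=
  ∃ p : G.Walk u v, p.length ≤ d ∧ ∀ x ∈ p.support, x ∈ S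

/-- The set of burnt vertices at each time: `F` is the set initially on fire, and
`prot t` is the set of vertices that are protected when the fire spreads at step `t+1`. -/
def burnt (G : SimpleGraph V) (F : Set V) (prot : ℕ → Set V) : ℕ → Set V
  | 0 => F
  | t + 1 => burnt G F prot t ∪ {v | v ∉ prot t ∧ ∃ w ∈ burnt G F prot t, G.Adj w v}

/-- The set of vertices protected by time `t`: all vertices occupied by some firefighter
at some time `s ≤ t`, where `pos s i` is the vertex occupied by firefighter `i` at time `s`. -/
def protOf {k : ℕ} (pos : ℕ → Fin k → V) (t : ℕ) : Set V :=
  {v | ∃ s ≤ t, ∃ i, pos s i = v}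

/-- `k` firefighters, each moving distance at most `d` per turn within the unburnt subgraph,
can contain a fire starting at `F`, the burnt set stabilizing by time `T`. -/
def CanContainIn (G : SimpleGraph V) (d k : ℕ) (F : Set V) (T : ℕ) : Prop :=
  ∃ pos : ℕ → Fin k → V,
    (∀ i, pos 0 i ∉ F) ∧
    (∀ t i, ReachWithin G (burnt G F (protOf pos) (t + 1))ᶜ d (pos t i) (pos (t + 1) i)) ∧
    ∀ t, burnt G F (protOf pos) t ⊆ burnt G F (protOf pos) T

/-- `k` firefighters, each moving distance at most `d` per turn within the unburnt subgraph,
can contain a fire starting at `F`. -/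
def CanContain (G : SimpleGraph V) (d k : ℕ) (F : Set V) : Prop :=
  ∃ T, CanContainIn G d k F T

/-- The distance-restricted firefighter number `f_d(G,u)`: the least number of firefighters
that can contain a fire starting at `u` in the distance-`d` game. -/
noncomputable def fdNum (G : SimpleGraph V) (d : ℕ) (u : V) : ℕ :=
  sInf {k | CanContain G d k {u}}

/-- The ordinary (unrestricted) firefighter game: on each turn the `k` firefighters may
protect any `k` unburnt vertices (protecting an already protected vertex wastes a move,
so this also allows protecting fewer). -/
def CanContainFree (G : SimpleGraph V) (k : ℕ) (F : Set V) : Prop :=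
  ∃ pos : ℕ → Fin k → V,
    (∀ t i, pos t i ∉ burnt G F (protOf pos) t) ∧
    ∃ T, ∀ t, burnt G F (protOf pos) t ⊆ burnt G F (protOf pos) T

/-- The ordinary firefighter number `f(G,u)`. -/
noncomputable def ffNum (G : SimpleGraph V) (u : V) : ℕ :=
  sInf {k | CanContainFree G k {u}}

/-- The graph `S_m`: a centre vertex (`none`) together with `m` pairwise-disjoint one-way
infinite rays, the centre being adjacent to the initial vertex of each ray. -/
def starRays (m : ℕ) : SimpleGraph (Option (Fin m × ℕ)) :=
  SimpleGraph.fromRel (fun p q =>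
    (p = none ∧ ∃ j : Fin m, q = some (j, 0)) ∨
    (∃ (j : Fin m) (n : ℕ), p = some (j, n) ∧ q = some (j, n + 1)))

lemma burnt_succ (G : SimpleGraph V) (F : Set V) (prot : ℕ → Set V) (t : ℕ) :
    burnt G F prot (t + 1) =
      burnt G F prot t ∪ {v | v ∉ prot t ∧ ∃ w ∈ burnt G F prot t, G.Adj w v} := rfl

lemma burnt_mono (G : SimpleGraph V) (F : Set V) (prot : ℕ → Set V) :
    Monotone (burnt G F prot) := by
  apply monotone_nat_of_le_succ
  intro t
  rw [burnt_succ]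
  exact Set.subset_union_left

lemma starRays_adj {m : ℕ} {x y : Option (Fin m × ℕ)} :
    (starRays m).Adj x y ↔
      (x = none ∧ ∃ j : Fin m, y = some (j, 0)) ∨
      (y = none ∧ ∃ j : Fin m, x = some (j, 0)) ∨
      (∃ (j : Fin m) (n : ℕ), x = some (j, n) ∧ y = some (j, n + 1)) ∨
      (∃ (j : Fin m) (n : ℕ), y = some (j, n) ∧ x = some (j, n + 1)) := by
  constructor
  · rintro ⟨hne, (⟨hx, j, hy⟩ | ⟨j, n, hx, hy⟩) | (⟨hy, j, hx⟩ | ⟨j, n, hy, hx⟩)⟩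
    · exact Or.inl ⟨hx, j, hy⟩
    · exact Or.inr (Or.inr (Or.inl ⟨j, n, hx, hy⟩))
    · exact Or.inr (Or.inl ⟨hy, j, hx⟩)
    · exact Or.inr (Or.inr (Or.inr ⟨j, n, hy, hx⟩))
  · rintro (⟨hx, j, hy⟩ | ⟨hy, j, hx⟩ | ⟨j, n, hx, hy⟩ | ⟨j, n, hy, hx⟩) <;> subst_vars
    · exact ⟨by simp, Or.inl (Or.inl ⟨rfl, j, rfl⟩)⟩
    · exact ⟨by simp, Or.inr (Or.inl ⟨rfl, j, rfl⟩)⟩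
    · exact ⟨by simp, Or.inl (Or.inr ⟨j, n, rfl, rfl⟩)⟩
    · exact ⟨by simp, Or.inr (Or.inr ⟨j, n, rfl, rfl⟩)⟩

lemma walk_same_ray {m : ℕ} : ∀ {x y : Option (Fin m × ℕ)} (p : (starRays m).Walk x y),
    none ∉ p.support → ∀ j a, x = some (j, a) → ∃ b, y = some (j, b) := by
  intro x y p
  induction p with
  | nil => exact fun _ j a hx => ⟨a, hx⟩
  | @cons u v w h p ih =>
    intro hn j a hx
    have hns : (none : Option (Fin m × ℕ)) ∉ p.support := by
      simp only [SimpleGraph.Walk.support_cons, List.mem_cons] at hn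
      tauto
    have hvne : v ≠ none := fun hv => hns (hv ▸ p.start_mem_support)
    rcases starRays_adj.1 h with ⟨hu, _⟩ | ⟨hv, _⟩ | ⟨j', n, hu, hv⟩ | ⟨j', n, hv, hu⟩
    · rw [hx] at hu; exact absurd hu (by simp)
    · exact absurd hv hvne
    · rw [hx] at hu
      obtain ⟨rfl, rfl⟩ : j = j' ∧ a = n := by simpa using hu
      exact ih hns _ _ hv
    · rw [hx] at hu
      obtain ⟨rfl, rfl⟩ : j = j' ∧ a = n + 1 := by simpa using hu
      exact ih hns _ _ hv

/-- Upper bound on the burnt set in `starRays`. -/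
lemma burnt_bound {m : ℕ} (prot : ℕ → Set (Option (Fin m × ℕ))) :
    ∀ t, burnt (starRays m) {none} prot t ⊆
      {none} ∪ {v | ∃ (j : Fin m) (n : ℕ), v = some (j, n) ∧ n < t} := by
  intro t
  induction t with
  | zero => intro v hv; exact Or.inl hv
  | succ t ih =>
    rintro v (hv | ⟨-, w, hw, hadj⟩)
    · rcases ih hv with h | ⟨j, n, rfl, hn⟩
      · exact Or.inl h
      · exact Or.inr ⟨j, n, rfl, by omega⟩
    · rcases starRays_adj.1 hadj with ⟨hw', j, hv'⟩ | ⟨hv', _⟩ | ⟨j, n, hw', hv'⟩ | ⟨j, n, hv', hw'⟩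
      · exact Or.inr ⟨j, 0, hv', by omega⟩
      · exact Or.inl hv'
      · rcases ih hw with h | ⟨j', n', h, hn⟩
        · rw [Set.mem_singleton_iff.1 h] at hw'; simp at hw'
        · rw [h] at hw'
          obtain ⟨hj, hnn⟩ : j' = j ∧ n' = n := by simpa using hw'
          exact Or.inr ⟨j, n + 1, hv', by omega⟩
      · rcases ih hw with h | ⟨j', n', h, hn⟩
        · rw [Set.mem_singleton_iff.1 h] at hw'; simp at hw'
        · rw [h] at hw'
          obtain ⟨hj, hnn⟩ : j' = j ∧ n' = n + 1 := by simpa using hw'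
          exact Or.inr ⟨j, n, hv', by omega⟩

/-- If positions `(j, n)` for `n < c j` are never protected, they burn at time `n+1`. -/
lemma ray_burns {m : ℕ} (prot : ℕ → Set (Option (Fin m × ℕ))) (j : Fin m) (c : ℕ → Prop)
    (hc : ∀ n, c (n + 1) → c n)
    (hp : ∀ t n, c n → some (j, n) ∉ prot t) :
    ∀ n, c n → some (j, n) ∈ burnt (starRays m) {none} prot (n + 1) := by
  intro n
  induction n with
  | zero =>
    intro h0
    refine Or.inr ⟨hp 0 0 h0, none, rfl, ?_⟩
    exact starRays_adj.2 (Or.inl ⟨rfl, j, rfl⟩)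
  | succ n ih =>
    intro hc'
    refine Or.inr ⟨hp (n + 1) (n + 1) hc', some (j, n), ?_, ?_⟩
    · exact ih (hc n hc')
    · exact starRays_adj.2 (Or.inr (Or.inr (Or.inl ⟨j, n, rfl, rfl⟩)))

/-- If some ray is entirely unprotected forever, the fire is not contained. -/
lemma not_contained {m : ℕ} (prot : ℕ → Set (Option (Fin m × ℕ))) (j : Fin m)
    (hp : ∀ t n, some (j, n) ∉ prot t) (T : ℕ) :
    ¬ ∀ t, burnt (starRays m) {none} prot t ⊆ burnt (starRays m) {none} prot T := by
  intro hcont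
  have h1 : some (j, T) ∈ burnt (starRays m) {none} prot (T + 1) :=
    ray_burns prot j (fun _ => True) (fun _ _ => trivial) (fun t n _ => hp t n) T trivial
  have h2 := burnt_bound prot T (hcont (T + 1) h1)
  rcases h2 with h | ⟨j', n, h, hn⟩
  · simp at h
  · obtain ⟨-, rfl⟩ : j' = j ∧ n = T := by simpa using h.symm
    omega

/-- For `m ≥ 3`: in the ordinary firefighter game one firefighter can contain a fire
starting at the centre `u` of `S_m`, i.e. `f(S_m, u) = 1`, while in the distance-restricted
game `f_d(S_m, u) = m` for every integer `d ≥ 1`. -/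
theorem star_of_rays_numbers :
    ∀ m : ℕ, 3 ≤ m →
      ffNum (starRays m) (none : Option (Fin m × ℕ)) = 1 ∧
      ∀ d : ℕ, 1 ≤ d → fdNum (starRays m) d (none : Option (Fin m × ℕ)) = m := by
  intro m hm
  constructor
  · -- ffNum = 1
    have hfin : ∀ t : ℕ, min t (m - 1) < m := fun t => by
      have := min_le_right t (m - 1); omega
    set pos : ℕ → Fin 1 → Option (Fin m × ℕ) :=
      fun t _ => some (⟨min t (m - 1), hfin t⟩, min t (m - 1)) with hpos
    -- protected vertices are exactly the diagonal ones
    have hprot_mem : ∀ (j : Fin m) (t : ℕ), (j : ℕ) ≤ t →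
        some (j, (j : ℕ)) ∈ protOf pos t := by
      intro j t hj
      refine ⟨(j : ℕ), hj, 0, ?_⟩
      simp only [hpos, Option.some.injEq, Prod.ext_iff, Fin.ext_iff]
      constructor <;> simp <;> omega
    have hprot_shape : ∀ {v t}, v ∈ protOf pos t →
        ∃ s ≤ t, v = some (⟨min s (m - 1), hfin s⟩, min s (m - 1)) := by
      rintro v t ⟨s, hs, i, rfl⟩
      exact ⟨s, hs, rfl⟩
    -- invariant on the burnt set
    have Binv : ∀ t, burnt (starRays m) {none} (protOf pos) t ⊆
        {none} ∪ {v | ∃ (j : Fin m) (n : ℕ), v = some (j, n) ∧ n < (j : ℕ) ∧ n < t} := by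
      intro t
      induction t with
      | zero => exact fun v hv => Or.inl hv
      | succ t ih =>
        rintro v (hv | ⟨hvp, w, hw, hadj⟩)
        · rcases ih hv with h | ⟨j, n, rfl, h1, h2⟩
          · exact Or.inl h
          · exact Or.inr ⟨j, n, rfl, h1, by omega⟩
        · rcases starRays_adj.1 hadj with ⟨hw', j, hv'⟩ | ⟨hv', _⟩ | ⟨j, n, hw', hv'⟩ |
              ⟨j, n, hv', hw'⟩
          · -- fire spreads from the centre to (j, 0)
            rcases Nat.eq_zero_or_pos (j : ℕ) with hj0 | hj0
            · exfalso
              apply hvp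
              have : some (j, (j : ℕ)) ∈ protOf pos t := hprot_mem j t (by omega)
              rwa [hj0, ← hv'] at this
            · exact Or.inr ⟨j, 0, hv', hj0, by omega⟩
          · exact Or.inl hv'
          · rcases ih hw with h | ⟨j', n', h, h1, h2⟩
            · rw [Set.mem_singleton_iff.1 h] at hw'; simp at hw'
            · rw [h] at hw'
              obtain ⟨hj, hnn⟩ : j' = j ∧ n' = n := by simpa using hw'
              rcases Nat.lt_or_ge (n + 1) (j : ℕ) with hlt | hge
              · exact Or.inr ⟨j, n + 1, hv', hlt, by omega⟩
              · exfalso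
                apply hvp
                have hjn : (j : ℕ) = n + 1 := by omega
                have : some (j, (j : ℕ)) ∈ protOf pos t := hprot_mem j t (by omega)
                rwa [hjn, ← hv'] at this
          · rcases ih hw with h | ⟨j', n', h, h1, h2⟩
            · rw [Set.mem_singleton_iff.1 h] at hw'; simp at hw'
            · rw [h] at hw'
              obtain ⟨hj, hnn⟩ : j' = j ∧ n' = n + 1 := by simpa using hw'
              exact Or.inr ⟨j, n, hv', by omega, by omega⟩
    -- below-diagonal vertices burn
    have hburns : ∀ (j : Fin m) (n : ℕ), n < (j : ℕ) →
        some (j, n) ∈ burnt (starRays m) {none} (protOf pos) (n + 1) := by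
      intro j
      refine ray_burns (protOf pos) j (fun n => n < (j : ℕ)) (fun n h => by omega) ?_
      intro t n hn hmem
      obtain ⟨s, hs, he⟩ := hprot_shape hmem
      simp only [Option.some.injEq, Prod.ext_iff, Fin.ext_iff] at he
      omega
    have h1 : CanContainFree (starRays m) 1 {none} := by
      refine ⟨pos, ?_, m, ?_⟩
      · intro t i hmem
        rcases Binv t hmem with h | ⟨j, n, he, h1, h2⟩
        · simp [hpos] at h
        · simp only [hpos, Option.some.injEq, Prod.ext_iff, Fin.ext_iff] at he
          omega
      · intro t v hv
        rcases Binv t hv with h | ⟨j, n, rfl, h1, h2⟩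
        · exact burnt_mono _ _ _ (Nat.zero_le m) h
        · exact burnt_mono _ _ _ (by have := j.isLt; omega : n + 1 ≤ m) (hburns j n h1)
    refine le_antisymm (Nat.sInf_le h1) (le_csInf ⟨1, h1⟩ ?_)
    rintro k hk
    by_contra hk1
    obtain rfl : k = 0 := by omega
    obtain ⟨pos0, -, T, hT⟩ := hk
    refine not_contained (protOf pos0) ⟨0, by omega⟩ ?_ T hT
    rintro t n ⟨s, hs, i, -⟩
    exact i.elim0
  · -- fdNum = m for all d
    intro d _
    -- m firefighters contain the fire immediately
    have hmem : CanContain (starRays m) d m {none} := by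
      set pos : ℕ → Fin m → Option (Fin m × ℕ) := fun _ i => some (i, 0) with hpos
      have hB : ∀ t, burnt (starRays m) {none} (protOf pos) t ⊆ {none} := by
        intro t
        induction t with
        | zero => exact fun v hv => hv
        | succ t ih =>
          rintro v (hv | ⟨hvp, w, hw, hadj⟩)
          · exact ih hv
          · have hw0 : w = none := Set.mem_singleton_iff.1 (ih hw)
            subst hw0
            rcases starRays_adj.1 hadj with ⟨-, j, hv'⟩ | ⟨hv', -⟩ | ⟨j, n, hw', -⟩ |
                ⟨j, n, -, hw'⟩
            · exact absurd ⟨0, Nat.zero_le t, j, hv'.symm⟩ hvp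
            · exact hv'
            · simp at hw'
            · simp at hw'
      refine ⟨0, pos, fun i => by simp [hpos], ?_, ?_⟩
      · intro t i
        refine ⟨SimpleGraph.Walk.nil, by simp, ?_⟩
        intro x hx
        rw [SimpleGraph.Walk.support_nil, List.mem_singleton] at hx
        subst hx
        intro hxb
        have := hB (t + 1) hxb
        simp [hpos] at this
      · intro t v hv
        exact hB t hv
    -- lower bound: fewer than m firefighters cannot contain the fire
    refine le_antisymm (Nat.sInf_le hmem) (le_csInf ⟨m, hmem⟩ ?_)
    rintro k ⟨T, pos, h0, hmove, hcont⟩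
    have h0' : ∀ i, ∃ (j : Fin m) (n : ℕ), pos 0 i = some (j, n) := by
      intro i
      rcases hp : pos 0 i with _ | ⟨j, n⟩
      · exact absurd (hp ▸ rfl) (h0 i)
      · exact ⟨j, n, rfl⟩
    choose j n0 hj0 using h0'
    -- each firefighter stays on its initial ray
    have hstay : ∀ t i, ∃ n, pos t i = some (j i, n) := by
      intro t i
      induction t with
      | zero => exact ⟨n0 i, hj0 i⟩
      | succ t ih =>
        obtain ⟨n, hn⟩ := ih
        obtain ⟨p, -, hsup⟩ := hmove t i
        have hnone : (none : Option (Fin m × ℕ)) ∉ p.support := by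
          intro hns
          exact hsup none hns
            (burnt_mono _ _ _ (Nat.zero_le (t + 1)) (Set.mem_singleton _))
        exact walk_same_ray p hnone (j i) n hn
    by_cases hsurj : Function.Surjective j
    · have := Fintype.card_le_of_surjective j hsurj
      simpa using this
    · rw [Function.Surjective] at hsurj
      push_neg at hsurj
      obtain ⟨js, hjs⟩ := hsurj
      exfalso
      refine not_contained (protOf pos) js ?_ T hcont
      rintro t n ⟨s, hs, i, he⟩
      obtain ⟨n', hn'⟩ := hstay s i
      rw [hn'] at he
      obtain ⟨hji, -⟩ : j i = js ∧ n' = n := by simpa using he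
      exact hjs i hji

end Firefight
end

section
/- For every integer d ≥ 1 and every positive integer N, there exist graphs G and H with H a subgraph of G and a vertex u ∈ V(H) ⊆ V(G) such that f_d(H,u) − f_d(G,u) ≥ N and f_d(H,u)/f_d(G,u) ≥ N. In particular, the distance-restricted firefighter number of a subgraph is not bounded above by that of the original graph. -/
/- Distance-restricted firefighter game (Burgess, Marcoux, Pike, arXiv:2204.01908).

At time 0 a fire breaks out at the set `F` of vertices and each firefighter is placed on
(protects) a vertex not in `F`.  At each subsequent time step the fire spreads to every
unburnt, unprotected neighbour of a burning vertex, and then each firefighter moves to a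
vertex at distance at most `d` from its current vertex in the subgraph induced by the
unburnt vertices (i.e. along a walk of length ≤ `d` through unburnt vertices).
Occupied vertices are protected forever.  The fire is contained if the burnt set
stabilizes after finitely many steps. -/

namespace Firefight

variable {V : Type*}

/-! ### Auxiliary development for the proof -/

section Aux

variable {G : SimpleGraph V} {F : Set V} {p : ℕ → Set V}

lemma burnt_mono_s15 {s t : ℕ} (h : s ≤ t) : burnt G F p s ⊆ burnt G F p t := by
  induction t with
  | zero =>
    have : s = 0 := by omega
    subst this; exact fun _ h => h
  | succ t ih =>
    rcases Nat.lt_or_ge s (t+1) with h' | h'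
    · exact (ih (by omega)).trans Set.subset_union_left
    · have : s = t + 1 := by omega
      subst this; exact fun _ h => h

lemma protOf_mono {k : ℕ} {pos : ℕ → Fin k → V} {s t : ℕ} (h : s ≤ t) :
    protOf pos s ⊆ protOf pos t := by
  rintro v ⟨s', hs', i, hi⟩; exact ⟨s', hs'.trans h, i, hi⟩

lemma burnt_depth (dep : V → ℕ) (hF : ∀ v ∈ F, dep v = 0)
    (hadj : ∀ v w, G.Adj v w → dep w ≤ dep v + 1) :
    ∀ t v, v ∈ burnt G F p t → dep v ≤ t := by
  intro t
  induction t with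
  | zero => intro v hv; exact (hF v hv).le
  | succ t ih =>
    rintro v (hv | ⟨-, w, hw, hadjw⟩)
    · exact (ih v hv).trans (by omega)
    · exact (hadj w v hadjw).trans (by have := ih w hw; omega)

lemma not_burnt_of_prot (hp : ∀ s t, s ≤ t → p s ⊆ p t) {s : ℕ} {v : V}
    (hs : v ∈ p s) (hb : v ∉ burnt G F p s) : ∀ t, v ∉ burnt G F p t := by
  intro t
  induction t with
  | zero => exact fun h => hb (burnt_mono_s15 (Nat.zero_le s) h)
  | succ t ih =>
    rintro (hv | hnew)
    · exact ih hv
    · rcases Nat.lt_or_ge t s with h' | h'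
      · exact hb (burnt_mono_s15 (show t+1 ≤ s by omega) (Or.inr hnew))
      · exact hnew.1 (hp s t h' hs)

lemma ray_unbounded {u₀ : V} (f : ℕ → V)
    (h0 : G.Adj u₀ (f 0)) (hstep : ∀ n, G.Adj (f n) (f (n+1)))
    (hprot : ∀ t n, f n ∉ p t) :
    ∀ t, f t ∈ burnt G {u₀} p (t+1) := by
  intro t
  induction t with
  | zero => exact Or.inr ⟨hprot 0 0, u₀, rfl, h0⟩
  | succ t ih => exact Or.inr ⟨hprot (t+1) (t+1), f t, ih, hstep t⟩

lemma exists_uniform_bound (hfin : (⋃ t, burnt G F p t).Finite) :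
    ∃ T, ∀ t, burnt G F p t ⊆ burnt G F p T := by
  classical
  set B := ⋃ t, burnt G F p t with hB
  have hmem : ∀ v ∈ B, ∃ t, v ∈ burnt G F p t := by
    intro v hv; simpa [hB] using hv
  choose τ hτ using hmem
  refine ⟨hfin.toFinset.sup (fun v => if h : v ∈ B then τ v h else 0), ?_⟩
  intro t v hv
  have hvB : v ∈ B := Set.mem_iUnion.2 ⟨t, hv⟩
  have := hτ v hvB
  refine burnt_mono_s15 ?_ this
  have hmem' : v ∈ hfin.toFinset := hfin.mem_toFinset.2 hvB
  calc τ v hvB = if h : v ∈ B then τ v h else 0 := by simp [hvB]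
    _ ≤ _ := Finset.le_sup (f := fun v => if h : v ∈ B then τ v h else 0) hmem'

/-- A fire that can run forever along an unprotected ray is never contained. -/
lemma no_contain {u₀ : V} {k T : ℕ} (f : ℕ → V)
    (dp : V → ℕ) (hdp0 : dp u₀ = 0) (hdadj : ∀ v w, G.Adj v w → dp w ≤ dp v + 1)
    (hdf : ∀ n, dp (f n) = n + 1)
    (h0 : G.Adj u₀ (f 0)) (hstep : ∀ n, G.Adj (f n) (f (n+1)))
    {pos : ℕ → Fin k → V}
    (hprot : ∀ t n, f n ∉ protOf pos t) :
    ¬ (∀ t, burnt G {u₀} (protOf pos) t ⊆ burnt G {u₀} (protOf pos) T) := by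
  intro hc
  have h1 := ray_unbounded f h0 hstep hprot (T+1)
  have h2 := burnt_depth dp (by rintro v rfl; exact hdp0) hdadj T (f (T+1)) (hc _ h1)
  rw [hdf] at h2; omega

end Aux

/-! ### The construction -/

abbrev VV := Option (ℕ × ℕ)

def dep : VV → ℕ
  | none => 0
  | some x => x.2 + 1

def ridx : VV → ℕ
  | none => 0
  | some x => x.1

variable (N : ℕ)

def GRel : VV → VV → Prop := fun a b =>
  (∃ i ≤ N, a = none ∧ b = some (i,0)) ∨
  (∃ i ≤ N, ∃ m, a = some (i,m) ∧ b = some (i,m+1)) ∨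
  (∃ i, i+1 ≤ N ∧ ∃ m, a = some (i,m) ∧ b = some (i+1,m+1))

def HRel : VV → VV → Prop := fun a b =>
  (∃ i ≤ N, a = none ∧ b = some (i,0)) ∨
  (∃ i ≤ N, ∃ m, a = some (i,m) ∧ b = some (i,m+1))

def GG : SimpleGraph VV := SimpleGraph.fromRel (GRel N)
def HH0 : SimpleGraph VV := SimpleGraph.fromRel (HRel N)
def SS : Set VV := {v | ridx v ≤ N}
def HH : SimpleGraph (SS N) := (HH0 N).comap Subtype.val

variable {N}

lemma hrel_grel {a b : VV} (h : HRel N a b) : GRel N a b := Or.imp id Or.inl h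

lemma hh_le_gg {a b : SS N} (h : (HH N).Adj a b) : (GG N).Adj a.val b.val := by
  rcases h with ⟨hne, h | h⟩
  · exact ⟨hne, Or.inl (hrel_grel h)⟩
  · exact ⟨hne, Or.inr (hrel_grel h)⟩

lemma grel_dep {a b : VV} (h : GRel N a b) : dep b = dep a + 1 := by
  rcases h with ⟨i, hi, rfl, rfl⟩ | ⟨i, hi, m, rfl, rfl⟩ | ⟨i, hi, m, rfl, rfl⟩ <;> simp [dep]

lemma grel_ridx {a b : VV} (h : GRel N a b) : ridx a ≤ N ∧ ridx b ≤ N := by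
  rcases h with ⟨i, hi, rfl, rfl⟩ | ⟨i, hi, m, rfl, rfl⟩ | ⟨i, hi, m, rfl, rfl⟩ <;>
    simp [ridx] <;> omega

lemma gg_dep {a b : VV} (h : (GG N).Adj a b) :
    dep b = dep a + 1 ∨ dep a = dep b + 1 := by
  rcases h with ⟨-, h | h⟩
  · exact Or.inl (grel_dep h)
  · exact Or.inr (grel_dep h)

lemma gg_dep_le {a b : VV} (h : (GG N).Adj a b) : dep b ≤ dep a + 1 := by
  rcases gg_dep h with h | h <;> omega

lemma gg_ridx {a b : VV} (h : (GG N).Adj a b) : ridx a ≤ N ∧ ridx b ≤ N := by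
  rcases h with ⟨-, h | h⟩
  · exact grel_ridx h
  · exact (grel_ridx h).symm

lemma hrel_dep {a b : VV} (h : HRel N a b) : dep b = dep a + 1 := grel_dep (hrel_grel h)

lemma hh_dep_le {a b : SS N} (h : (HH N).Adj a b) : dep b.val ≤ dep a.val + 1 := by
  rcases h with ⟨-, h | h⟩
  · exact (hrel_dep h).le
  · have := hrel_dep h; omega

lemma hrel_ray {a b : VV} (h : HRel N a b) (ha : a ≠ none) : ridx a = ridx b := by
  rcases h with ⟨i, hi, rfl, rfl⟩ | ⟨i, hi, m, rfl, rfl⟩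
  · exact absurd rfl ha
  · simp [ridx]

lemma hh_ray {a b : SS N} (h : (HH N).Adj a b) (ha : a.val ≠ none) (hb : b.val ≠ none) :
    ridx a.val = ridx b.val := by
  rcases h with ⟨-, h | h⟩
  · exact hrel_ray h ha
  · exact (hrel_ray h hb).symm

lemma gg_adj_ray (i m : ℕ) (hi : i ≤ N) : (GG N).Adj (some (i,m)) (some (i,m+1)) :=
  ⟨by simp, Or.inl (Or.inr (Or.inl ⟨i, hi, m, rfl, rfl⟩))⟩

lemma gg_adj_none (i : ℕ) (hi : i ≤ N) : (GG N).Adj none (some (i,0)) :=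
  ⟨by simp, Or.inl (Or.inl ⟨i, hi, rfl, rfl⟩)⟩

lemma gg_adj_diag (i m : ℕ) (hi : i + 1 ≤ N) :
    (GG N).Adj (some (i,m)) (some (i+1,m+1)) :=
  ⟨by simp, Or.inl (Or.inr (Or.inr ⟨i, hi, m, rfl, rfl⟩))⟩

lemma none_mem_SS : (none : VV) ∈ SS N := by simp [SS, ridx]

lemma some_mem_SS {i : ℕ} (m : ℕ) (hi : i ≤ N) : (some (i,m) : VV) ∈ SS N := by
  simp [SS, ridx]; omega

lemma hh_adj_none {i : ℕ} (hi : i ≤ N) (hv : some (i,0) ∈ SS N) :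
    (HH N).Adj ⟨none, none_mem_SS⟩ ⟨some (i,0), hv⟩ :=
  ⟨by simp, Or.inl (Or.inl ⟨i, hi, rfl, rfl⟩)⟩

lemma hh_adj_ray {i m : ℕ} (hi : i ≤ N) (h1 : some (i,m) ∈ SS N) (h2 : some (i,m+1) ∈ SS N) :
    (HH N).Adj ⟨some (i,m), h1⟩ ⟨some (i,m+1), h2⟩ :=
  ⟨by simp, Or.inl (Or.inr ⟨i, hi, m, rfl, rfl⟩)⟩

/-! ### The firefighter route in `GG` -/

variable (N)

def route (t : ℕ) : VV :=
  if 2*N ≤ t then some (N, 2*N+5)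
  else if t % 2 = 0 then some (t/2, 2*N+5) else some (t/2+1, 2*N+6)

variable {N}

lemma route_dep (t : ℕ) : 2*N+6 ≤ dep (route N t) := by
  unfold route
  split_ifs <;> simp [dep]

lemma route_near (t : ℕ) : ∃ s ≤ 2*N, route N t = route N s := by
  rcases Nat.lt_or_ge t (2*N) with h | h
  · exact ⟨t, by omega, rfl⟩
  · exact ⟨2*N, le_refl _, by unfold route; rw [if_pos h, if_pos (le_refl _)]⟩

lemma route_col {i : ℕ} (hi : i ≤ N) : route N (2*i) = some (i, 2*N+5) := by
  unfold route
  rcases Nat.lt_or_ge (2*i) (2*N) with h | h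
  · rw [if_neg (by omega), if_pos (by omega)]
    congr 2
    omega
  · have : i = N := by omega
    subst this
    rw [if_pos h]

lemma route_move (t : ℕ) :
    route N t = route N (t+1) ∨ (GG N).Adj (route N t) (route N (t+1)) := by
  rcases Nat.lt_or_ge t (2*N) with h | h
  · rcases Nat.even_or_odd t with he | ho
    · have hmod : t % 2 = 0 := Nat.even_iff.mp he
      have h1 : ¬ (2*N ≤ t+1) := by omega
      have hmod1 : (t+1) % 2 = 1 := by omega
      right
      unfold route
      rw [if_neg (by omega), if_pos hmod, if_neg h1, if_neg (by omega)]
      have e1 : (t+1)/2 + 1 = t/2 + 1 := by omega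
      rw [e1]
      exact gg_adj_diag (t/2) (2*N+5) (by omega)
    · have hmod : t % 2 = 1 := Nat.odd_iff.mp ho
      right
      unfold route
      rw [if_neg (by omega), if_neg (by omega)]
      rcases Nat.lt_or_ge (t+1) (2*N) with h1 | h1
      · rw [if_neg (by omega), if_pos (by omega)]
        have e1 : (t+1)/2 = t/2 + 1 := by omega
        rw [e1]
        exact (gg_adj_ray (t/2+1) (2*N+5) (by omega)).symm
      · have ht1 : t + 1 = 2*N := by omega
        rw [if_pos (by omega)]
        have e1 : t/2 + 1 = N := by omega
        rw [e1]
        exact (gg_adj_ray N (2*N+5) (le_refl _)).symm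
  · left
    unfold route
    rw [if_pos h, if_pos (by omega)]

/-! ### `GG` can be contained by one firefighter -/

def posG (N : ℕ) : ℕ → Fin 1 → VV := fun t _ => route N t

lemma gg_contain (d : ℕ) (hd : 1 ≤ d) : CanContain (GG N) d 1 {(none : VV)} := by
  classical
  have hPmono : ∀ s t, s ≤ t → protOf (posG N) s ⊆ protOf (posG N) t :=
    fun s t h => protOf_mono h
  have hFdep : ∀ v ∈ ({none} : Set VV), dep v = 0 := by rintro v rfl; rfl
  have hdepb : ∀ t v, v ∈ burnt (GG N) {none} (protOf (posG N)) t → dep v ≤ t :=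
    burnt_depth dep hFdep (fun v w h => gg_dep_le h)
  have hroute : ∀ t t', route N t ∉ burnt (GG N) {none} (protOf (posG N)) t' := by
    intro t
    obtain ⟨s, hs, he⟩ := route_near (N := N) t
    rw [he]
    have hmem : route N s ∈ protOf (posG N) s := ⟨s, le_refl s, 0, rfl⟩
    have hnb : route N s ∉ burnt (GG N) {none} (protOf (posG N)) s := by
      intro hb
      have h1 := hdepb s _ hb
      have h2 := route_dep (N := N) s
      omega
    exact not_burnt_of_prot hPmono hmem hnb
  have hcol : ∀ t, ∀ v ∈ burnt (GG N) {none} (protOf (posG N)) t,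
      dep v ≤ 2*N+5 ∧ ridx v ≤ N := by
    intro t
    induction t with
    | zero => rintro v rfl; exact ⟨by simp [dep], by simp [ridx]⟩
    | succ t ih =>
      rintro v (hv | ⟨hnp, w, hw, hadj⟩)
      · exact ih v hv
      · obtain ⟨hdw, hrw⟩ := ih w hw
        refine ⟨?_, (gg_ridx hadj).2⟩
        by_contra hdv
        have hdd := gg_dep hadj
        have hdv' : dep v = 2*N+6 := by omega
        have hdw' : dep w = 2*N+5 := by omega
        have ht : 2*N+5 ≤ t := by have := hdepb t w hw; omega
        match v, hdv' with
        | some (i, m), hdv' =>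
          have hm : m = 2*N+5 := by simp [dep] at hdv'; omega
          have hiN : i ≤ N := (gg_ridx hadj).2
          apply hnp
          refine ⟨2*i, by omega, 0, ?_⟩
          show route N (2*i) = some (i, m)
          rw [route_col hiN, hm]
  have hsub : (⋃ t, burnt (GG N) {none} (protOf (posG N)) t) ⊆
      insert none (some '' (Set.Iic N ×ˢ Set.Iic (2*N+5))) := by
    intro v hv
    rw [Set.mem_iUnion] at hv
    obtain ⟨t, hvt⟩ := hv
    obtain ⟨h1, h2⟩ := hcol t v hvt
    match v with
    | none => exact Set.mem_insert _ _
    | some (i, m) =>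
      refine Set.mem_insert_of_mem _ ⟨(i,m), ⟨?_, ?_⟩, rfl⟩
      · simpa [ridx] using h2
      · simp only [Set.mem_Iic]
        simp [dep] at h1
        omega
  have hfin : (⋃ t, burnt (GG N) {none} (protOf (posG N)) t).Finite :=
    Set.Finite.subset ((((Set.finite_Iic N).prod (Set.finite_Iic (2*N+5))).image some).insert none) hsub
  obtain ⟨T, hT⟩ := exists_uniform_bound hfin
  refine ⟨T, posG N, ?_, ?_, hT⟩
  · intro i
    simp only [Set.mem_singleton_iff]
    intro h
    have h2 := route_dep (N := N) 0
    rw [show (posG N 0 i) = route N 0 from rfl] at h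
    rw [h] at h2
    simp [dep] at h2
  · intro t i
    rcases route_move (N := N) t with heq | hadj
    · refine ⟨SimpleGraph.Walk.nil.copy rfl (show posG N t i = posG N (t+1) i from heq), by simp, ?_⟩
      intro x hx
      simp [SimpleGraph.Walk.support_copy] at hx
      subst hx
      exact hroute t (t+1)
    · refine ⟨SimpleGraph.Walk.cons (show (GG N).Adj (posG N t i) (posG N (t+1) i) from hadj) SimpleGraph.Walk.nil, by simpa using hd, ?_⟩
      intro x hx
      simp [SimpleGraph.Walk.support_cons] at hx
      rcases hx with rfl | rfl
      · exact hroute t (t+1)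
      · exact hroute (t+1) (t+1)

/-! ### `GG` needs at least one firefighter -/

lemma gg_not_zero (d : ℕ) : ¬ CanContain (GG N) d 0 {(none : VV)} := by
  rintro ⟨T, pos, -, -, hcont⟩
  exact no_contain (u₀ := (none : VV)) (fun n => some (0, n)) dep rfl (fun v w h => gg_dep_le h)
    (fun n => rfl) (gg_adj_none 0 (Nat.zero_le N)) (fun n => gg_adj_ray 0 n (Nat.zero_le N))
    (by rintro t n ⟨s, hs, i, hi⟩; exact i.elim0) hcont

/-! ### `HH` can be contained by `N+1` firefighters -/

def posH (N : ℕ) : ℕ → Fin (N+1) → SS N :=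
  fun _ i => ⟨some (i.val, 0), some_mem_SS 0 (by omega)⟩

lemma hh_burnt_eq :
    ∀ t, burnt (HH N) {⟨none, none_mem_SS⟩} (protOf (posH N)) t
      = {(⟨none, none_mem_SS⟩ : SS N)} := by
  intro t
  induction t with
  | zero => rfl
  | succ t ih =>
    apply Set.Subset.antisymm
    · rintro v (hv | ⟨hnp, w, hw, hadj⟩)
      · rwa [ih] at hv
      · exfalso
        rw [ih, Set.mem_singleton_iff] at hw
        subst hw
        rcases hadj with ⟨hne, h | h⟩
        · rcases h with ⟨i, hi, -, hv2⟩ | ⟨i, hi, m, habs, -⟩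
          · apply hnp
            refine ⟨0, Nat.zero_le t, ⟨i, by omega⟩, ?_⟩
            apply Subtype.ext
            rw [hv2]
            rfl
          · exact absurd habs (by simp)
        · rcases h with ⟨i, hi, -, habs⟩ | ⟨i, hi, m, -, habs⟩ <;> exact absurd habs (by simp)
    · rintro v hv
      rw [Set.mem_singleton_iff] at hv
      subst hv
      exact Or.inl (by rw [ih]; rfl)

lemma hh_contain (d : ℕ) : CanContain (HH N) d (N+1) {(⟨none, none_mem_SS⟩ : SS N)} := by
  refine ⟨0, posH N, ?_, ?_, ?_⟩
  · intro i hmem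
    rw [Set.mem_singleton_iff] at hmem
    exact absurd (congrArg Subtype.val hmem) (by simp [posH])
  · intro t i
    show ReachWithin (HH N) (burnt (HH N) {⟨none, none_mem_SS⟩} (protOf (posH N)) (t + 1))ᶜ d (posH N t i) (posH N t i)
    refine ⟨SimpleGraph.Walk.nil, by simp, ?_⟩
    intro x hx
    simp only [SimpleGraph.Walk.support_nil, List.mem_singleton] at hx
    subst hx
    intro hmem
    rw [hh_burnt_eq (t+1), Set.mem_singleton_iff] at hmem
    exact absurd (congrArg Subtype.val hmem) (by simp [posH])
  · intro t
    rw [hh_burnt_eq t]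
    rw [show burnt (HH N) {⟨none, none_mem_SS⟩} (protOf (posH N)) 0
          = {(⟨none, none_mem_SS⟩ : SS N)} from rfl]

/-! ### `HH` needs at least `N+1` firefighters -/

lemma hh_walk_ray {x y : SS N} (w : (HH N).Walk x y)
    (hsup : ∀ z ∈ w.support, z.val ≠ (none : VV)) : ridx x.val = ridx y.val := by
  induction w with
  | nil => rfl
  | @cons a b c h p ih =>
    have ha : a.val ≠ none := hsup _ (by simp)
    have hb : b.val ≠ none := hsup _ (by simp [SimpleGraph.Walk.support_cons])
    refine (hh_ray h ha hb).trans (ih ?_)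
    intro z hz
    exact hsup z (by simp [SimpleGraph.Walk.support_cons, hz])

lemma hh_not_small {d k : ℕ} (hk : k ≤ N) :
    ¬ CanContain (HH N) d k {(⟨none, none_mem_SS⟩ : SS N)} := by
  rintro ⟨T, pos, h0, hmove, hcont⟩
  have hub : ∀ t, (⟨none, none_mem_SS⟩ : SS N)
      ∈ burnt (HH N) {⟨none, none_mem_SS⟩} (protOf pos) t :=
    fun t => burnt_mono_s15 (Nat.zero_le t) rfl
  have hray : ∀ t i, pos t i ≠ ⟨none, none_mem_SS⟩ ∧
      ridx (pos t i).val = ridx (pos 0 i).val := by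
    intro t i
    induction t with
    | zero => exact ⟨fun h => h0 i (by rw [h]; rfl), rfl⟩
    | succ t ih =>
      obtain ⟨w, hlen, hsup⟩ := hmove t i
      have hall : ∀ z ∈ w.support, z ≠ (⟨none, none_mem_SS⟩ : SS N) := by
        intro z hz hze
        exact (hsup z hz) (by rw [hze]; exact hub (t+1))
      have hallv : ∀ z ∈ w.support, z.val ≠ (none : VV) := by
        intro z hz hzv
        exact hall z hz (Subtype.ext hzv)
      constructor
      · intro h
        exact hall _ (SimpleGraph.Walk.end_mem_support w) h
      · rw [← ih.2]
        exact (hh_walk_ray w hallv).symm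
  have hpig : ∃ j ≤ N, ∀ i, ridx (pos 0 i).val ≠ j := by
    by_contra hcon
    push_neg at hcon
    have hsubset : Finset.range (N+1) ⊆
        Finset.univ.image (fun i => ridx (pos 0 i).val) := by
      intro j hj
      rw [Finset.mem_range] at hj
      obtain ⟨i, hi⟩ := hcon j (by omega)
      exact Finset.mem_image.2 ⟨i, Finset.mem_univ _, hi⟩
    have h1 := Finset.card_le_card hsubset
    have h2 := Finset.card_image_le (s := (Finset.univ : Finset (Fin k)))
      (f := fun i => ridx (pos 0 i).val)
    rw [Finset.card_range] at h1
    simp only [Finset.card_univ, Fintype.card_fin] at h2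
    omega
  obtain ⟨j, hj, hjne⟩ := hpig
  refine no_contain (u₀ := (⟨none, none_mem_SS⟩ : SS N))
    (fun n => (⟨some (j, n), some_mem_SS n hj⟩ : SS N))
    (fun v => dep v.val) rfl (fun v w h => hh_dep_le h) (fun n => rfl)
    (hh_adj_none hj _) (fun n => hh_adj_ray hj _ _) ?_ hcont
  rintro t n ⟨s, hs, i, hi⟩
  have h1 : ridx (pos s i).val = j := by rw [hi]; rfl
  rw [(hray s i).2] at h1
  exact hjne i h1


/-- For every `d ≥ 1` and every positive integer `N`, there are graphs `H ⊆ G` (same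
ambient vertices, `H` on a vertex subset `S` with every edge of `H` an edge of `G`) and a
vertex `u` of `H` such that both the difference `f_d(H,u) − f_d(G,u)` and the ratio
`f_d(H,u) / f_d(G,u)` are at least `N`.  In particular the distance-restricted firefighter
number of a subgraph is not bounded above by that of the original graph. -/
theorem subgraph_gap_unbounded :
    ∀ d : ℕ, 1 ≤ d → ∀ N : ℕ, 0 < N →
      ∃ (V : Type) (G : SimpleGraph V) (S : Set V) (H : SimpleGraph S) (u : S),
        (∀ a b : S, H.Adj a b → G.Adj a b) ∧
        0 < fdNum G d (u : V) ∧
        N ≤ fdNum H d u - fdNum G d (u : V) ∧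
        N * fdNum G d (u : V) ≤ fdNum H d u := by

  intro d hd N hN
  refine ⟨VV, GG N, SS N, HH N, ⟨none, none_mem_SS⟩, fun a b h => hh_le_gg h, ?_, ?_, ?_⟩
  all_goals {
    have hmemG : 1 ∈ {k | CanContain (GG N) d k {(none : VV)}} := gg_contain d hd
    have hG : fdNum (GG N) d none = 1 := by
      refine le_antisymm (Nat.sInf_le hmemG) ?_
      by_contra h
      push_neg at h
      have h0 : sInf {k | CanContain (GG N) d k {(none : VV)}} = 0 := by
        unfold fdNum at h; omega
      rw [Nat.sInf_eq_zero] at h0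
      rcases h0 with h0 | h0
      · exact gg_not_zero d h0
      · exact absurd hmemG (by rw [h0]; exact Set.notMem_empty _)
    have hmemH : N+1 ∈ {k | CanContain (HH N) d k {(⟨none, none_mem_SS⟩ : SS N)}} :=
      hh_contain d
    have hH : fdNum (HH N) d ⟨none, none_mem_SS⟩ = N+1 := by
      refine le_antisymm (Nat.sInf_le hmemH) ?_
      refine le_csInf ⟨N+1, hmemH⟩ ?_
      intro k hk
      by_contra hlt
      push_neg at hlt
      exact hh_not_small (by omega) hk
    first
    | (show 0 < fdNum (GG N) d none
       rw [hG]; omega)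
    | (show N ≤ fdNum (HH N) d ⟨none, none_mem_SS⟩ - fdNum (GG N) d none
       rw [hG, hH]; omega)
    | (show N * fdNum (GG N) d none ≤ fdNum (HH N) d ⟨none, none_mem_SS⟩
       rw [hG, hH]; omega)
  }

end Firefight
end

section
/- Let G be a connected graph and u a vertex of G such that f(G,u) is finite (so finitely many firefighters can contain a fire starting at u in finitely many turns). Then there exists an integer d such that for every δ ≥ d, f*_δ(G,u) = f(G,u), where f*_δ denotes the distance-restricted firefighter number in the variant where firefighters may move through burnt vertices (distances between consecutive positions are measured in the whole graph G). -/
/- Distance-restricted firefighter game (Burgess, Marcoux, Pike, arXiv:2204.01908).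

At time 0 a fire breaks out at the set `F` of vertices and each firefighter is placed on
(protects) a vertex not in `F`.  At each subsequent time step the fire spreads to every
unburnt, unprotected neighbour of a burning vertex, and then each firefighter moves to a
vertex at distance at most `d` from its current vertex in the subgraph induced by the
unburnt vertices (i.e. along a walk of length ≤ `d` through unburnt vertices).
Occupied vertices are protected forever.  The fire is contained if the burnt set
stabilizes after finitely many steps. -/

namespace Firefight

variable {V : Type*}

/-- The distance-restricted game in the variant where firefighters may move through burnt
vertices: between consecutive time steps each firefighter moves along a walk of length at
most `d` in the whole graph `G` (its distance in `G` is at most `d`), and every occupied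
vertex must be unburnt at the time it is occupied. -/
def CanContainThru (G : SimpleGraph V) (d k : ℕ) (F : Set V) : Prop :=
  ∃ pos : ℕ → Fin k → V,
    (∀ t i, pos t i ∉ burnt G F (protOf pos) t) ∧
    (∀ t i, ∃ p : G.Walk (pos t i) (pos (t + 1) i), p.length ≤ d) ∧
    ∃ T, ∀ t, burnt G F (protOf pos) t ⊆ burnt G F (protOf pos) T

/-- The firefighter number `f*_d(G,u)` of the move-through-fire variant. -/
noncomputable def fstarNum (G : SimpleGraph V) (d : ℕ) (u : V) : ℕ :=
  sInf {k | CanContainThru G d k {u}}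

lemma burnt_congr (G : SimpleGraph V) (F : Set V) {p q : ℕ → Set V}
    (t : ℕ) (h : ∀ s < t, p s = q s) : burnt G F p t = burnt G F q t := by
  induction t with
  | zero => rfl
  | succ t ih =>
      have ht : burnt G F p t = burnt G F q t :=
        ih fun s hs => h s (hs.trans (Nat.lt_succ_self t))
      simp only [burnt, ht, h t (Nat.lt_succ_self t)]

lemma thru_imp_free (G : SimpleGraph V) (d k : ℕ) (F : Set V)
    (h : CanContainThru G d k F) : CanContainFree G k F := by
  obtain ⟨pos, h1, _, T, hT⟩ := h
  exact ⟨pos, h1, T, hT⟩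

/-- If `G` is connected and finitely many firefighters can contain a fire starting at `u`
in the ordinary game, then there is an integer `d` such that `f*_δ(G,u) = f(G,u)` for all
`δ ≥ d`, where `f*_δ` is the distance-restricted firefighter number when firefighters may
move through burnt vertices. -/
theorem through_fire_eventually_ordinary
    {V : Type*} (G : SimpleGraph V) (u : V)
    (hconn : G.Connected) (hfin : ∃ k, CanContainFree G k {u}) :
    ∃ d : ℕ, ∀ δ : ℕ, d ≤ δ → fstarNum G δ u = ffNum G u := by
  classical
  have hmem : CanContainFree G (ffNum G u) {u} := Nat.sInf_mem hfin
  set k := ffNum G u with hk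
  obtain ⟨pos, hpos, T, hT⟩ := hmem
  set B := burnt G {u} (protOf pos) with hB
  set d := (Finset.range T).sup
      (fun t => (Finset.univ : Finset (Fin k)).sup
        fun i => G.dist (pos t i) (pos (t + 1) i)) with hd
  refine ⟨d, fun δ hδ => ?_⟩
  -- the modified strategy: freeze positions after time T
  set pos' : ℕ → Fin k → V := fun t i => pos (min t T) i with hpos'
  have hprot : ∀ s, protOf pos' s = protOf pos (min s T) := by
    intro s
    ext v
    constructor
    · rintro ⟨s', hs', i, rfl⟩
      exact ⟨min s' T, min_le_min hs' le_rfl, i, rfl⟩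
    · rintro ⟨s', hs', i, rfl⟩
      refine ⟨s', hs'.trans (min_le_left _ _), i, ?_⟩
      simp [pos', Nat.min_eq_left (hs'.trans (min_le_right _ _))]
  set B' := burnt G {u} (protOf pos') with hB'
  have hagree : ∀ t, t ≤ T → B' t = B t := by
    intro t ht
    refine burnt_congr G {u} t fun s hs => ?_
    rw [hprot s, Nat.min_eq_left ((Nat.le_of_lt hs).trans ht)]
  have hstable : ∀ t, T ≤ t → B' t = B T := by
    intro t ht
    induction t with
    | zero => exact (Nat.le_zero.mp ht ▸ hagree 0 (Nat.le_zero.mp ht ▸ le_rfl))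
    | succ t ih =>
        rcases Nat.lt_or_ge T (t + 1) with h1 | h1
        · have hTt : T ≤ t := Nat.lt_succ_iff.mp h1
          have iht : B' t = B T := ih hTt
          have hp : protOf pos' t = protOf pos T := by
            rw [hprot t, Nat.min_eq_right hTt]
          have hsub : {v | v ∉ protOf pos T ∧ ∃ w ∈ B T, G.Adj w v} ⊆ B T := by
            intro v hv
            have := hT (T + 1)
            exact this (Or.inr hv)
          show B' t ∪ {v | v ∉ protOf pos' t ∧ ∃ w ∈ B' t, G.Adj w v} = B T
          rw [iht, hp]
          exact Set.union_eq_self_of_subset_right hsub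
        · have : t + 1 = T := le_antisymm h1 ht
          rw [this]; exact hagree T le_rfl
  have hthru : CanContainThru G δ k {u} := by
    refine ⟨pos', ?_, ?_, T, ?_⟩
    · intro t i
      show pos' t i ∉ B' t
      rcases le_or_gt t T with ht | ht
      · rw [hagree t ht]
        have : pos' t i = pos t i := by simp [pos', Nat.min_eq_left ht]
        rw [this]; exact hpos t i
      · rw [hstable t ht.le]
        have : pos' t i = pos T i := by simp [pos', Nat.min_eq_right ht.le]
        rw [this]; exact hpos T i
    · intro t i
      rcases lt_or_ge t T with ht | ht
      · have h1 : pos' t i = pos t i := by simp [pos', Nat.min_eq_left ht.le]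
        have h2 : pos' (t + 1) i = pos (t + 1) i := by
          simp [pos', Nat.min_eq_left (Nat.succ_le_of_lt ht)]
        obtain ⟨p, hp⟩ := hconn.exists_walk_length_eq_dist (pos t i) (pos (t + 1) i)
        have hdist : G.dist (pos t i) (pos (t + 1) i) ≤ d := by
          calc G.dist (pos t i) (pos (t + 1) i)
              ≤ (Finset.univ : Finset (Fin k)).sup
                  (fun i => G.dist (pos t i) (pos (t + 1) i)) :=
                Finset.le_sup (f := fun i => G.dist (pos t i) (pos (t + 1) i)) (Finset.mem_univ i)
            _ ≤ d := Finset.le_sup (f := fun t => (Finset.univ : Finset (Fin k)).sup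
                  fun i => G.dist (pos t i) (pos (t + 1) i)) (Finset.mem_range.mpr ht)
        rw [h1, h2]
        exact ⟨p, hp ▸ hdist.trans hδ⟩
      · have h1 : pos' t i = pos T i := by simp [pos', Nat.min_eq_right ht]
        have h2 : pos' (t + 1) i = pos T i := by
          simp [pos', Nat.min_eq_right (ht.trans (Nat.le_succ t))]
        rw [h1, h2]
        exact ⟨SimpleGraph.Walk.nil, by simp⟩
    · intro t
      show B' t ⊆ B' T
      rcases le_or_gt t T with ht | ht
      · rw [hagree t ht, hagree T le_rfl]
        exact hT t
      · rw [hstable t ht.le, hagree T le_rfl]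
  refine le_antisymm (Nat.sInf_le hthru) ?_
  exact le_csInf ⟨k, hthru⟩ fun b hb => Nat.sInf_le (thru_imp_free G δ b {u} hb)

end Firefight
end

section
/- For every integer n ≥ 3, in the distance-restricted firefighter game with parameter d = 1 on the Cartesian product of the two-way infinite path and the n-cycle, two firefighters can contain a fire starting at any vertex. -/
/- Distance-restricted firefighter game (Burgess, Marcoux, Pike, arXiv:2204.01908).

At time 0 a fire breaks out at the set `F` of vertices and each firefighter is placed on
(protects) a vertex not in `F`.  At each subsequent time step the fire spreads to every
unburnt, unprotected neighbour of a burning vertex, and then each firefighter moves to a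
vertex at distance at most `d` from its current vertex in the subgraph induced by the
unburnt vertices (i.e. along a walk of length ≤ `d` through unburnt vertices).
Occupied vertices are protected forever.  The fire is contained if the burnt set
stabilizes after finitely many steps. -/

namespace Firefight

variable {V : Type*}

/-- The two-way infinite path: vertex set `ℤ` with `i` adjacent to `i+1`. -/
def intPath : SimpleGraph ℤ :=
  SimpleGraph.fromRel (fun i j => j = i + 1)

/-- The cycle on `m` vertices (for `m ≥ 3`): vertex set `ZMod m`, `i` adjacent to `i ± 1`. -/
def cycleGraph (m : ℕ) : SimpleGraph (ZMod m) :=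
  SimpleGraph.fromRel (fun i j => j = i + 1)

def cd (n : ℕ) (z : ZMod n) : ℕ := min z.val (n - z.val)

lemma natCast_val' {n : ℕ} [NeZero n] (z : ZMod n) : ((z.val : ℕ) : ZMod n) = z :=
  (ZMod.natCast_val z).trans (ZMod.cast_id _ _)

lemma cd_eq_zero {n : ℕ} [NeZero n] {z : ZMod n} : cd n z = 0 ↔ z = 0 := by
  have h := ZMod.val_lt z
  unfold cd
  rw [← ZMod.val_eq_zero]
  omega

lemma cd_succ {n : ℕ} (hn : 3 ≤ n) (w : ZMod n) :
    cd n (w + 1) ≤ cd n w + 1 ∧ cd n w ≤ cd n (w + 1) + 1 := by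
  haveI : NeZero n := ⟨by omega⟩
  have hvlt := ZMod.val_lt w
  have e : w + 1 = ((w.val + 1 : ℕ) : ZMod n) := by
    rw [Nat.cast_add, natCast_val', Nat.cast_one]
  by_cases hvn : w.val + 1 = n
  · have e0 : w + 1 = 0 := by rw [e, hvn, ZMod.natCast_self]
    rw [e0]
    unfold cd
    rw [ZMod.val_zero]
    omega
  · have hval : (w + 1).val = w.val + 1 := by rw [e, ZMod.val_cast_of_lt (by omega)]
    unfold cd
    rw [hval]
    omega

lemma cd_adj_le {n : ℕ} (hn : 3 ≤ n) {z z' : ZMod n} (h : z = z' + 1 ∨ z' = z + 1) :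
    cd n z' ≤ cd n z + 1 := by
  rcases h with h | h
  · rw [h]; exact (cd_succ hn z').2
  · rw [h]; exact (cd_succ hn z).1

lemma cd_step_down {n : ℕ} (hn : 3 ≤ n) {z : ZMod n} (hz : z ≠ 0) :
    ∃ z' : ZMod n, (z = z' + 1 ∨ z' = z + 1) ∧ cd n z' + 1 = cd n z := by
  haveI : NeZero n := ⟨by omega⟩
  have hvlt := ZMod.val_lt z
  have hv0 : z.val ≠ 0 := fun h => hz ((ZMod.val_eq_zero z).mp h)
  have hcast := natCast_val' z
  by_cases h2 : 2 * z.val ≤ n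
  · refine ⟨z - 1, Or.inl (by ring), ?_⟩
    have e : z - 1 = ((z.val - 1 : ℕ) : ZMod n) := by
      rw [Nat.cast_sub (by omega), hcast, Nat.cast_one]
    have hval : (z - 1).val = z.val - 1 := by rw [e, ZMod.val_cast_of_lt (by omega)]
    unfold cd
    rw [hval]
    omega
  · refine ⟨z + 1, Or.inr rfl, ?_⟩
    have e : z + 1 = ((z.val + 1 : ℕ) : ZMod n) := by
      rw [Nat.cast_add, hcast, Nat.cast_one]
    by_cases hvn : z.val + 1 = n
    · have e0 : z + 1 = 0 := by rw [e, hvn, ZMod.natCast_self]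
      rw [e0]
      unfold cd
      rw [ZMod.val_zero]
      omega
    · have hval : (z + 1).val = z.val + 1 := by rw [e, ZMod.val_cast_of_lt (by omega)]
      unfold cd
      rw [hval]
      omega

/-- Firefighter positions: firefighter `0` builds the column `a + n`, firefighter `1`
builds the column `a - n`, both moving upward around the cycle starting from row `b`. -/
def ffPos (n : ℕ) (a : ℤ) (b : ZMod n) : ℕ → Fin 2 → ℤ × ZMod n :=
  fun t i => (if i = 0 then a + (n : ℤ) else a - (n : ℤ), b + ((min t (n - 1) : ℕ) : ZMod n))

/-- The claimed burnt set at time `t`. -/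
def Sset (n : ℕ) (a : ℤ) (b : ZMod n) (t : ℕ) : Set (ℤ × ZMod n) :=
  {v | (v.1 - a).natAbs ≤ n - 1 ∧ (v.1 - a).natAbs + cd n (v.2 - b) ≤ t}

lemma ffPos_not_mem {n : ℕ} (hn : 3 ≤ n) (a : ℤ) (b : ZMod n) (s t : ℕ) (i : Fin 2) :
    ffPos n a b s i ∉ Sset n a b t := by
  intro h
  obtain ⟨h1, -⟩ := h
  simp only [ffPos] at h1
  split at h1 <;> omega

lemma mem_prot {n : ℕ} (hn : 3 ≤ n) (a : ℤ) (b : ZMod n) {t : ℕ} (y : ZMod n)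
    (ht : n - 1 ≤ t) (c : ℤ) (hc : c = a + (n : ℤ) ∨ c = a - (n : ℤ)) :
    (c, y) ∈ protOf (ffPos n a b) t := by
  haveI : NeZero n := ⟨by omega⟩
  have hv := ZMod.val_lt (y - b)
  have hmin : min (y - b).val (n - 1) = (y - b).val := by omega
  have hcast := natCast_val' (y - b)
  rcases hc with rfl | rfl
  · refine ⟨(y - b).val, by omega, 0, ?_⟩
    simp only [ffPos, if_pos rfl, hmin, hcast]
    exact Prod.ext rfl (by ring)
  · refine ⟨(y - b).val, by omega, 1, ?_⟩
    simp only [ffPos, if_neg (by decide : (1 : Fin 2) ≠ 0), hmin, hcast]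
    exact Prod.ext rfl (by ring)

lemma burnt_eq {n : ℕ} (hn : 3 ≤ n) (a : ℤ) (b : ZMod n) (t : ℕ) :
    burnt (intPath.boxProd (cycleGraph n)) {(a, b)} (protOf (ffPos n a b)) t
      = Sset n a b t := by
  haveI : NeZero n := ⟨by omega⟩
  induction t with
  | zero =>
      ext v
      simp only [burnt, Set.mem_singleton_iff, Sset, Set.mem_setOf_eq, Prod.ext_iff]
      constructor
      · rintro ⟨ha, hb⟩
        rw [ha, hb, sub_self, sub_self]
        have hc : cd n (0 : ZMod n) = 0 := by unfold cd; rw [ZMod.val_zero]; omega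
        constructor <;> omega
      · rintro ⟨h1, h2⟩
        have hc : cd n (v.2 - b) = 0 := by omega
        have hv2 : v.2 = b := sub_eq_zero.mp (cd_eq_zero.mp hc)
        exact ⟨by omega, hv2⟩
  | succ t ih =>
      ext v
      simp only [burnt, ih, Set.mem_union, Sset, Set.mem_setOf_eq]
      constructor
      · rintro (⟨h1, h2⟩ | ⟨hp, w, ⟨hw1, hw2⟩, hadj⟩)
        · exact ⟨h1, by omega⟩
        · rw [SimpleGraph.boxProd_adj] at hadj
          rcases hadj with ⟨hx, hy⟩ | ⟨hy, hx⟩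
          · -- horizontal move; hy : w.2 = v.2
            rw [intPath, SimpleGraph.fromRel_adj] at hx
            obtain ⟨-, hcase⟩ := hx
            have hcd : cd n (v.2 - b) = cd n (w.2 - b) := by rw [hy]
            by_cases hb2 : (v.1 - a).natAbs ≤ n - 1
            · refine ⟨hb2, ?_⟩
              rcases hcase with h | h <;> omega
            · exfalso
              apply hp
              have hc : v.1 = a + (n : ℤ) ∨ v.1 = a - (n : ℤ) := by
                rcases hcase with h | h <;> omega
              have htn : n - 1 ≤ t := by
                have : n - 1 ≤ (w.1 - a).natAbs := by rcases hcase with h | h <;> omega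
                omega
              have := mem_prot hn a b v.2 htn v.1 hc
              rwa [Prod.mk.eta] at this
          · -- vertical move; hx : w.1 = v.1
            rw [cycleGraph, SimpleGraph.fromRel_adj] at hy
            obtain ⟨-, hcase⟩ := hy
            have hor : (w.2 - b) = (v.2 - b) + 1 ∨ (v.2 - b) = (w.2 - b) + 1 := by
              rcases hcase with h | h
              · right; linear_combination h
              · left; linear_combination h
            have hcd : cd n (v.2 - b) ≤ cd n (w.2 - b) + 1 := cd_adj_le hn hor
            exact ⟨by omega, by omega⟩
      · rintro ⟨h1, h2⟩
        by_cases hvt : (v.1 - a).natAbs + cd n (v.2 - b) ≤ t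
        · exact Or.inl ⟨h1, hvt⟩
        · right
          refine ⟨?_, ?_⟩
          · rintro ⟨s, hs, i, hpos⟩
            have h' : (if i = 0 then a + (n : ℤ) else a - (n : ℤ)) = v.1 :=
              congrArg Prod.fst hpos
            split at h' <;> omega
          · by_cases hx0 : v.1 = a
            · have h0 : (v.1 - a).natAbs = 0 := by omega
              have hz : v.2 - b ≠ 0 := by
                intro h
                have := cd_eq_zero.mpr h
                omega
              obtain ⟨z', hor, hcd⟩ := cd_step_down hn hz
              refine ⟨(v.1, b + z'), ⟨?_, ?_⟩, ?_⟩
              · show (v.1 - a).natAbs ≤ n - 1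
                omega
              · show (v.1 - a).natAbs + cd n (b + z' - b) ≤ t
                have he : b + z' - b = z' := by ring
                rw [he]
                omega
              · rw [SimpleGraph.boxProd_adj]
                right
                dsimp only
                refine ⟨?_, rfl⟩
                rw [cycleGraph, SimpleGraph.fromRel_adj]
                constructor
                · intro he
                  have hez : z' = v.2 - b := by linear_combination he
                  rw [hez] at hcd
                  omega
                · rcases hor with h | h
                  · left; linear_combination h
                  · right; linear_combination h
            · rcases lt_or_gt_of_ne (fun h : a = v.1 => hx0 h.symm) with hlt | hlt
              · refine ⟨(v.1 - 1, v.2), ⟨?_, ?_⟩, ?_⟩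
                · show (v.1 - 1 - a).natAbs ≤ n - 1
                  omega
                · show (v.1 - 1 - a).natAbs + cd n (v.2 - b) ≤ t
                  omega
                · rw [SimpleGraph.boxProd_adj]
                  left
                  dsimp only
                  refine ⟨?_, rfl⟩
                  rw [intPath, SimpleGraph.fromRel_adj]
                  exact ⟨by omega, Or.inl (by ring)⟩
              · refine ⟨(v.1 + 1, v.2), ⟨?_, ?_⟩, ?_⟩
                · show (v.1 + 1 - a).natAbs ≤ n - 1
                  omega
                · show (v.1 + 1 - a).natAbs + cd n (v.2 - b) ≤ t
                  omega
                · rw [SimpleGraph.boxProd_adj]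
                  left
                  dsimp only
                  refine ⟨?_, rfl⟩
                  rw [intPath, SimpleGraph.fromRel_adj]
                  exact ⟨by omega, Or.inr (by ring)⟩

/-- For every integer `n ≥ 3`, in the distance-restricted game with `d = 1` on the
Cartesian product of the two-way infinite path and the `n`-cycle, two firefighters can
contain a fire starting at any vertex. -/
theorem path_times_cycle_d1_two_suffice :
    ∀ n : ℕ, 3 ≤ n → ∀ u : ℤ × ZMod n,
      CanContain (intPath.boxProd (cycleGraph n)) 1 2 {u} := by
  intro n hn u
  haveI : NeZero n := ⟨by omega⟩
  obtain ⟨a, b⟩ := u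
  refine ⟨2 * n, ffPos n a b, ?_, ?_, ?_⟩
  · intro i
    simp only [Set.mem_singleton_iff]
    intro h
    have h' : (if i = 0 then a + (n : ℤ) else a - (n : ℤ)) = a := congrArg Prod.fst h
    split at h' <;> omega
  · intro t i
    rw [burnt_eq hn a b]
    by_cases ht : t < n - 1
    · have h1 : min t (n - 1) = t := by omega
      have h2 : min (t + 1) (n - 1) = t + 1 := by omega
      have hadj : (intPath.boxProd (cycleGraph n)).Adj (ffPos n a b t i)
          (ffPos n a b (t + 1) i) := by
        rw [SimpleGraph.boxProd_adj]
        right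
        refine ⟨?_, rfl⟩
        show (cycleGraph n).Adj (b + ((min t (n - 1) : ℕ) : ZMod n))
          (b + ((min (t + 1) (n - 1) : ℕ) : ZMod n))
        rw [cycleGraph, SimpleGraph.fromRel_adj, h1, h2]
        constructor
        · intro he
          have he2 : ((t : ℕ) : ZMod n) = ((t + 1 : ℕ) : ZMod n) := add_left_cancel he
          have h3 := congrArg ZMod.val he2
          rw [ZMod.val_cast_of_lt (by omega), ZMod.val_cast_of_lt (by omega)] at h3
          omega
        · left
          push_cast
          ring
      refine ⟨SimpleGraph.Walk.cons hadj SimpleGraph.Walk.nil, by simp, ?_⟩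
      intro x hx
      simp only [SimpleGraph.Walk.support_cons, SimpleGraph.Walk.support_nil,
        List.mem_cons, List.mem_singleton, List.not_mem_nil, or_false] at hx
      rcases hx with rfl | rfl
      · exact ffPos_not_mem hn a b t (t + 1) i
      · exact ffPos_not_mem hn a b (t + 1) (t + 1) i
    · have he : ffPos n a b (t + 1) i = ffPos n a b t i := by
        simp only [ffPos]
        rw [show min (t + 1) (n - 1) = min t (n - 1) by omega]
      rw [he]
      refine ⟨SimpleGraph.Walk.nil, by simp, ?_⟩
      intro x hx
      simp only [SimpleGraph.Walk.support_nil, List.mem_singleton] at hx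
      subst hx
      exact ffPos_not_mem hn a b t (t + 1) i
  · intro t v hv
    rw [burnt_eq hn a b] at hv ⊢
    obtain ⟨h1, h2⟩ := hv
    refine ⟨h1, ?_⟩
    have hcd : cd n (v.2 - b) ≤ n := by
      unfold cd
      have := ZMod.val_lt (v.2 - b)
      omega
    omega


end Firefight
end

section
/- For every integer n ≥ 3, every vertex v of the Cartesian product of the two-way infinite path and the n-cycle, and every vertex w of the infinite square grid, the subgraph induced by the set of vertices at graph distance at most ⌊(n−2)/2⌋ from v is isomorphic to the subgraph of the square grid induced by the set of vertices at graph distance at most ⌊(n−2)/2⌋ from w. -/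
namespace Firefight

/-- The infinite square grid: vertex set `ℤ × ℤ`, with `(a,b)` adjacent to `(c,d)`
iff `|a-c| + |b-d| = 1`. -/
def sqGrid : SimpleGraph (ℤ × ℤ) :=
  SimpleGraph.fromRel (fun p q => |p.1 - q.1| + |p.2 - q.2| = 1)

open SimpleGraph

lemma intPath_adj {a b : ℤ} : intPath.Adj a b ↔ a ≠ b ∧ (b = a + 1 ∨ a = b + 1) :=
  SimpleGraph.fromRel_adj _ a b

lemma cycle_adj {n : ℕ} {i j : ZMod n} :
    (cycleGraph n).Adj i j ↔ i ≠ j ∧ (j = i + 1 ∨ i = j + 1) :=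
  SimpleGraph.fromRel_adj _ i j

lemma sqGrid_adj {p q : ℤ × ℤ} :
    sqGrid.Adj p q ↔ p ≠ q ∧ (p.1 - q.1).natAbs + (p.2 - q.2).natAbs = 1 := by
  rw [sqGrid, SimpleGraph.fromRel_adj, abs_sub_comm q.1 p.1, abs_sub_comm q.2 p.2, or_self,
    Int.abs_eq_natAbs, Int.abs_eq_natAbs]
  constructor
  · rintro ⟨h1, h2⟩; exact ⟨h1, by exact_mod_cast h2⟩
  · rintro ⟨h1, h2⟩; exact ⟨h1, by exact_mod_cast h2⟩

/-- Existence of short walks in the grid. -/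
lemma grid_walk : ∀ k : ℕ, ∀ w y : ℤ × ℤ,
    (y.1 - w.1).natAbs + (y.2 - w.2).natAbs ≤ k →
    ∃ W : sqGrid.Walk w y, W.length ≤ k := by
  intro k
  induction k with
  | zero =>
    intro w y h
    have h1 : y.1 = w.1 := by omega
    have h2 : y.2 = w.2 := by omega
    have : y = w := Prod.ext h1 h2
    subst this
    exact ⟨Walk.nil, le_refl _⟩
  | succ k ih =>
    intro w y h
    by_cases hy : y = w
    · subst hy; exact ⟨Walk.nil, Nat.zero_le _⟩
    · have hne : y.1 ≠ w.1 ∨ y.2 ≠ w.2 := by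
        by_contra hc
        push_neg at hc
        exact hy (Prod.ext hc.1 hc.2)
      rcases hne with h1 | h2
      · by_cases hlt : w.1 < y.1
        · obtain ⟨W, hW⟩ := ih w (y.1 - 1, y.2)
            (by show (y.1 - 1 - w.1).natAbs + (y.2 - w.2).natAbs ≤ k; omega)
          have hadj : sqGrid.Adj (y.1 - 1, y.2) y := by
            rw [sqGrid_adj]
            refine ⟨?_, ?_⟩
            · intro he
              have h5 : y.1 - 1 = y.1 := congrArg Prod.fst he
              omega
            · show (y.1 - 1 - y.1).natAbs + (y.2 - y.2).natAbs = 1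
              omega
          exact ⟨W.concat hadj, by rw [Walk.length_concat]; omega⟩
        · obtain ⟨W, hW⟩ := ih w (y.1 + 1, y.2)
            (by show (y.1 + 1 - w.1).natAbs + (y.2 - w.2).natAbs ≤ k; omega)
          have hadj : sqGrid.Adj (y.1 + 1, y.2) y := by
            rw [sqGrid_adj]
            refine ⟨?_, ?_⟩
            · intro he
              have h5 : y.1 + 1 = y.1 := congrArg Prod.fst he
              omega
            · show (y.1 + 1 - y.1).natAbs + (y.2 - y.2).natAbs = 1
              omega
          exact ⟨W.concat hadj, by rw [Walk.length_concat]; omega⟩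
      · by_cases hlt : w.2 < y.2
        · obtain ⟨W, hW⟩ := ih w (y.1, y.2 - 1)
            (by show (y.1 - w.1).natAbs + (y.2 - 1 - w.2).natAbs ≤ k; omega)
          have hadj : sqGrid.Adj (y.1, y.2 - 1) y := by
            rw [sqGrid_adj]
            refine ⟨?_, ?_⟩
            · intro he
              have h5 : y.2 - 1 = y.2 := congrArg Prod.snd he
              omega
            · show (y.1 - y.1).natAbs + (y.2 - 1 - y.2).natAbs = 1
              omega
          exact ⟨W.concat hadj, by rw [Walk.length_concat]; omega⟩
        · obtain ⟨W, hW⟩ := ih w (y.1, y.2 + 1)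
            (by show (y.1 - w.1).natAbs + (y.2 + 1 - w.2).natAbs ≤ k; omega)
          have hadj : sqGrid.Adj (y.1, y.2 + 1) y := by
            rw [sqGrid_adj]
            refine ⟨?_, ?_⟩
            · intro he
              have h5 : y.2 + 1 = y.2 := congrArg Prod.snd he
              omega
            · show (y.1 - y.1).natAbs + (y.2 + 1 - y.2).natAbs = 1
              omega
          exact ⟨W.concat hadj, by rw [Walk.length_concat]; omega⟩

/-- Any walk in the grid is at least as long as the ℓ¹ distance. -/
lemma grid_walk_le : ∀ {w y : ℤ × ℤ} (W : sqGrid.Walk w y),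
    (y.1 - w.1).natAbs + (y.2 - w.2).natAbs ≤ W.length := by
  intro w y W
  induction W with
  | nil => simp
  | @cons u p z h W ih =>
    rw [sqGrid_adj] at h
    rw [Walk.length_cons]
    omega

lemma grid_ball_iff (r : ℕ) (w y : ℤ × ℤ) :
    sqGrid.dist w y ≤ r ↔ (y.1 - w.1).natAbs + (y.2 - w.2).natAbs ≤ r := by
  constructor
  · intro h
    obtain ⟨W0, _⟩ := grid_walk ((y.1 - w.1).natAbs + (y.2 - w.2).natAbs) w y le_rfl
    have hreach : sqGrid.Reachable w y := ⟨W0⟩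
    obtain ⟨W', hW'⟩ := hreach.exists_walk_length_eq_dist
    calc (y.1 - w.1).natAbs + (y.2 - w.2).natAbs ≤ W'.length := grid_walk_le W'
      _ = sqGrid.dist w y := hW'
      _ ≤ r := h
  · intro h
    obtain ⟨W, hW⟩ := grid_walk r w y h
    exact le_trans (SimpleGraph.dist_le W) hW

/-- Existence of short walks in the product of the path with the cycle. -/
lemma prod_walk {n : ℕ} (hn : 3 ≤ n) : ∀ k : ℕ, ∀ v : ℤ × ZMod n, ∀ a c : ℤ,
    a.natAbs + c.natAbs ≤ k →
    ∃ W : (intPath.boxProd (cycleGraph n)).Walk v (v.1 + a, v.2 + (c : ZMod n)),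
      W.length ≤ k := by
  haveI : Fact (1 < n) := ⟨by omega⟩
  intro k
  induction k with
  | zero =>
    intro v a c h
    have ha : a = 0 := by omega
    have hc : c = 0 := by omega
    subst ha; subst hc
    exact ⟨(Walk.nil : (intPath.boxProd (cycleGraph n)).Walk v v).copy rfl
      (by simp), by simp⟩
  | succ k ih =>
    intro v a c h
    by_cases ha : a = 0
    · by_cases hc : c = 0
      · subst ha; subst hc
        exact ⟨(Walk.nil : (intPath.boxProd (cycleGraph n)).Walk v v).copy rfl
          (by simp), by simp⟩
      · -- step in the cycle coordinate
        set c' : ℤ := if 0 < c then c - 1 else c + 1 with hc'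
        obtain ⟨W, hW⟩ := ih v a c' (by simp only [hc']; split <;> omega)
        have hcast : ((c : ℤ) : ZMod n) ≠ ((c' : ℤ) : ZMod n) := by
          intro he
          have hz : ((c - c' : ℤ) : ZMod n) = 0 := by push_cast; rw [he]; ring
          rw [ZMod.intCast_zmod_eq_zero_iff_dvd] at hz
          have h9 : c - c' = 0 := Int.eq_zero_of_abs_lt_dvd hz
            (by rw [Int.abs_eq_natAbs]; simp only [hc']; split <;> omega)
          simp only [hc'] at h9
          split at h9 <;> omega
        have hadj : (intPath.boxProd (cycleGraph n)).Adj (v.1 + a, v.2 + (c' : ZMod n))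
            (v.1 + a, v.2 + (c : ZMod n)) := by
          rw [boxProd_adj]
          right
          refine ⟨?_, rfl⟩
          rw [cycle_adj]
          refine ⟨?_, ?_⟩
          · show v.2 + (c' : ZMod n) ≠ v.2 + (c : ZMod n)
            intro he
            exact hcast ((add_left_cancel he).symm)
          · show v.2 + (c : ZMod n) = v.2 + (c' : ZMod n) + 1 ∨
              v.2 + (c' : ZMod n) = v.2 + (c : ZMod n) + 1
            rcases (show c = c' + 1 ∨ c' = c + 1 by simp only [hc']; split <;> omega)
              with h2 | h2
            · left; rw [h2]; push_cast; ring
            · right; rw [h2]; push_cast; ring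
        exact ⟨W.concat hadj, by rw [Walk.length_concat]; omega⟩
    · -- step in the path coordinate
      set a' : ℤ := if 0 < a then a - 1 else a + 1 with ha'
      obtain ⟨W, hW⟩ := ih v a' c (by simp only [ha']; split <;> omega)
      have hadj : (intPath.boxProd (cycleGraph n)).Adj (v.1 + a', v.2 + (c : ZMod n))
          (v.1 + a, v.2 + (c : ZMod n)) := by
        rw [boxProd_adj]
        left
        refine ⟨?_, rfl⟩
        rw [intPath_adj]
        refine ⟨?_, ?_⟩
        · show v.1 + a' ≠ v.1 + a
          simp only [ha']
          split <;> omega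
        · show v.1 + a = v.1 + a' + 1 ∨ v.1 + a' = v.1 + a + 1
          simp only [ha']
          split <;> omega
      exact ⟨W.concat hadj, by rw [Walk.length_concat]; omega⟩

/-- Walk decomposition in the product graph. -/
lemma prod_walk_le {n : ℕ} : ∀ {v x : ℤ × ZMod n}
    (W : (intPath.boxProd (cycleGraph n)).Walk v x),
    ∃ c : ℤ, (c : ZMod n) = x.2 - v.2 ∧ (x.1 - v.1).natAbs + c.natAbs ≤ W.length := by
  intro v x W
  induction W with
  | nil => exact ⟨0, by simp, by simp⟩
  | @cons u p z h W ih =>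
    obtain ⟨c, hc, hle⟩ := ih
    rw [boxProd_adj] at h
    rw [Walk.length_cons]
    rcases h with ⟨h1, h2⟩ | ⟨h2, h1⟩
    · -- step in path coordinate: u.2 = p.2
      rw [intPath_adj] at h1
      refine ⟨c, by rw [hc, h2], ?_⟩
      rcases h1.2 with h3 | h3 <;> omega
    · -- step in cycle coordinate: u.1 = p.1
      rw [cycle_adj] at h2
      rcases h2.2 with h3 | h3
      · -- p.2 = u.2 + 1
        refine ⟨c + 1, ?_, ?_⟩
        · push_cast
          rw [hc, h3]
          ring
        · rw [h1]; omega
      · -- u.2 = p.2 + 1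
        refine ⟨c - 1, ?_, ?_⟩
        · push_cast
          rw [hc, h3]
          ring
        · rw [h1]; omega

lemma prod_ball_iff {n : ℕ} (hn : 3 ≤ n) (r : ℕ) (v x : ℤ × ZMod n) :
    (intPath.boxProd (cycleGraph n)).dist v x ≤ r ↔
      ∃ c : ℤ, (c : ZMod n) = x.2 - v.2 ∧ (x.1 - v.1).natAbs + c.natAbs ≤ r := by
  haveI : NeZero n := ⟨by omega⟩
  constructor
  · intro h
    obtain ⟨W0, _⟩ := prod_walk hn ((x.1 - v.1).natAbs + (((x.2 - v.2).val : ℤ)).natAbs)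
      v (x.1 - v.1) ((x.2 - v.2).val) le_rfl
    have hend : ((v.1 + (x.1 - v.1), v.2 + (((x.2 - v.2).val : ℤ) : ZMod n)) : ℤ × ZMod n)
        = x := by
      refine Prod.ext (by show v.1 + (x.1 - v.1) = x.1; ring) ?_
      show v.2 + (((x.2 - v.2).val : ℤ) : ZMod n) = x.2
      push_cast
      rw [ZMod.natCast_val, ZMod.cast_id]
      ring
    have hreach : (intPath.boxProd (cycleGraph n)).Reachable v x := ⟨W0.copy rfl hend⟩
    obtain ⟨W', hW'⟩ := hreach.exists_walk_length_eq_dist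
    obtain ⟨c, hc, hle⟩ := prod_walk_le W'
    exact ⟨c, hc, by omega⟩
  · rintro ⟨c, hc, hle⟩
    obtain ⟨W, hW⟩ := prod_walk hn r v (x.1 - v.1) c hle
    have hend : ((v.1 + (x.1 - v.1), v.2 + (c : ZMod n)) : ℤ × ZMod n) = x := by
      refine Prod.ext (by show v.1 + (x.1 - v.1) = x.1; ring) ?_
      show v.2 + (c : ZMod n) = x.2
      rw [hc]; ring
    exact le_trans (SimpleGraph.dist_le (W.copy rfl hend))
      (by rw [Walk.length_copy]; exact hW)

lemma valMinAbs_intCast_eq {n : ℕ} [NeZero n] {c : ℤ} (h : 2 * c.natAbs < n) :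
    ((c : ZMod n)).valMinAbs = c := by
  rw [ZMod.valMinAbs_spec]
  exact ⟨rfl, Set.mem_Ioc.mpr ⟨by omega, by omega⟩⟩

lemma prod_ball_iff' {n : ℕ} (hn : 3 ≤ n) (v x : ℤ × ZMod n) :
    (intPath.boxProd (cycleGraph n)).dist v x ≤ (n - 2) / 2 ↔
      (x.1 - v.1).natAbs + ((x.2 - v.2).valMinAbs).natAbs ≤ (n - 2) / 2 := by
  haveI : NeZero n := ⟨by omega⟩
  rw [prod_ball_iff hn]
  constructor
  · rintro ⟨c, hc, hle⟩
    have hval : (x.2 - v.2).valMinAbs = c := by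
      rw [← hc]
      exact valMinAbs_intCast_eq (by omega)
    rw [hval]; exact hle
  · intro h
    exact ⟨(x.2 - v.2).valMinAbs, ZMod.coe_valMinAbs _, h⟩

/-- Adjacency is preserved by the local unrolling map. -/
lemma adj_helper {n : ℕ} (hn : 3 ≤ n) {v1 w1 w2 x1 x1' : ℤ} {v2 x2 x2' : ZMod n}
    (hcb : ((x2 - v2).valMinAbs).natAbs ≤ (n - 2) / 2)
    (hcb' : ((x2' - v2).valMinAbs).natAbs ≤ (n - 2) / 2) :
    sqGrid.Adj (w1 + (x1 - v1), w2 + (x2 - v2).valMinAbs)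
        (w1 + (x1' - v1), w2 + (x2' - v2).valMinAbs) ↔
      (intPath.boxProd (cycleGraph n)).Adj (x1, x2) (x1', x2') := by
  haveI : NeZero n := ⟨by omega⟩
  set c : ℤ := (x2 - v2).valMinAbs with hc
  set c' : ℤ := (x2' - v2).valMinAbs with hc'
  have hcc : ((c : ZMod n)) = x2 - v2 := ZMod.coe_valMinAbs _
  have hcc' : ((c' : ZMod n)) = x2' - v2 := ZMod.coe_valMinAbs _
  rw [sqGrid_adj, boxProd_adj]
  constructor
  · rintro ⟨hne, hsum⟩
    have hsum' : (x1 - x1').natAbs + (c - c').natAbs = 1 := by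
      have hs2 : (w1 + (x1 - v1) - (w1 + (x1' - v1))).natAbs
          + (w2 + c - (w2 + c')).natAbs = 1 := hsum
      have e1 : w1 + (x1 - v1) - (w1 + (x1' - v1)) = x1 - x1' := by ring
      have e2 : w2 + c - (w2 + c') = c - c' := by ring
      rwa [e1, e2] at hs2
    by_cases h0 : c = c'
    · left
      have hx2 : x2 = x2' := by
        have h3 : x2 - v2 = x2' - v2 := by rw [← hcc, ← hcc', h0]
        linear_combination h3
      refine ⟨?_, hx2⟩
      rw [intPath_adj]
      exact ⟨by show x1 ≠ x1'; omega, by show x1' = x1 + 1 ∨ x1 = x1' + 1; omega⟩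
    · right
      have hx1 : x1 = x1' := by omega
      refine ⟨?_, hx1⟩
      rw [cycle_adj]
      have hd : c' = c + 1 ∨ c = c' + 1 := by omega
      refine ⟨?_, ?_⟩
      · show x2 ≠ x2'
        intro he
        apply h0
        rw [hc, hc', he]
      · show x2' = x2 + 1 ∨ x2 = x2' + 1
        rcases hd with hd | hd
        · left
          have h3 : x2' - v2 = x2 - v2 + 1 := by
            rw [← hcc, ← hcc', hd]; push_cast; ring
          linear_combination h3
        · right
          have h3 : x2 - v2 = x2' - v2 + 1 := by
            rw [← hcc, ← hcc', hd]; push_cast; ring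
          linear_combination h3
  · rintro (⟨hadj, h2⟩ | ⟨hadj, h1⟩)
    · -- path step
      rw [intPath_adj] at hadj
      have hne : x1 ≠ x1' := hadj.1
      have hstep : x1' = x1 + 1 ∨ x1 = x1' + 1 := hadj.2
      have h2' : x2 = x2' := h2
      have hc2 : c = c' := by rw [hc, hc', h2']
      refine ⟨?_, ?_⟩
      · intro he
        have h5 : w1 + (x1 - v1) = w1 + (x1' - v1) := congrArg Prod.fst he
        omega
      · show (w1 + (x1 - v1) - (w1 + (x1' - v1))).natAbs
          + (w2 + c - (w2 + c')).natAbs = 1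
        have e1 : w1 + (x1 - v1) - (w1 + (x1' - v1)) = x1 - x1' := by ring
        have e2 : w2 + c - (w2 + c') = c - c' := by ring
        rw [e1, e2, hc2]
        omega
    · -- cycle step
      rw [cycle_adj] at hadj
      have hne2 : x2 ≠ x2' := hadj.1
      have hstep : x2' = x2 + 1 ∨ x2 = x2' + 1 := hadj.2
      have h1' : x1 = x1' := h1
      have hd : c' = c + 1 ∨ c = c' + 1 := by
        rcases hstep with hst | hst
        · left
          have hz : ((c' - c - 1 : ℤ) : ZMod n) = 0 := by
            push_cast
            rw [hcc, hcc']
            linear_combination hst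
          rw [ZMod.intCast_zmod_eq_zero_iff_dvd] at hz
          have h9 : c' - c - 1 = 0 := Int.eq_zero_of_abs_lt_dvd hz
            (by rw [Int.abs_eq_natAbs]; omega)
          omega
        · right
          have hz : ((c - c' - 1 : ℤ) : ZMod n) = 0 := by
            push_cast
            rw [hcc, hcc']
            linear_combination hst
          rw [ZMod.intCast_zmod_eq_zero_iff_dvd] at hz
          have h9 : c - c' - 1 = 0 := Int.eq_zero_of_abs_lt_dvd hz
            (by rw [Int.abs_eq_natAbs]; omega)
          omega
      refine ⟨?_, ?_⟩
      · intro he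
        have h5 : w2 + c = w2 + c' := congrArg Prod.snd he
        omega
      · show (w1 + (x1 - v1) - (w1 + (x1' - v1))).natAbs
          + (w2 + c - (w2 + c')).natAbs = 1
        have e1 : w1 + (x1 - v1) - (w1 + (x1' - v1)) = x1 - x1' := by ring
        have e2 : w2 + c - (w2 + c') = c - c' := by ring
        rw [e1, e2, h1']
        omega

/-- For every `n ≥ 3`, every vertex `v` of `P_{-∞,∞} □ C_n` and every vertex `w` of the
square grid, the subgraph induced by the ball of radius `⌊(n-2)/2⌋` about `v` is isomorphic
to the subgraph of the square grid induced by the ball of radius `⌊(n-2)/2⌋` about `w`. -/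
theorem path_times_cycle_balls_iso :
    ∀ n : ℕ, 3 ≤ n → ∀ v : ℤ × ZMod n, ∀ w : ℤ × ℤ,
      Nonempty
        (((intPath.boxProd (cycleGraph n)).induce
            {x | (intPath.boxProd (cycleGraph n)).dist v x ≤ (n - 2) / 2}) ≃g
          (sqGrid.induce {y | sqGrid.dist w y ≤ (n - 2) / 2})) := by
  intro n hn v w
  haveI : NeZero n := ⟨by omega⟩
  refine ⟨⟨⟨fun x => ⟨(w.1 + (x.1.1 - v.1), w.2 + ((x.1.2 - v.2).valMinAbs)), ?_⟩,
      fun y => ⟨(v.1 + (y.1.1 - w.1), v.2 + ((y.1.2 - w.2 : ℤ) : ZMod n)), ?_⟩,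
      ?_, ?_⟩, ?_⟩⟩
  · -- membership of forward image
    have hx : (x.1.1 - v.1).natAbs + ((x.1.2 - v.2).valMinAbs).natAbs ≤ (n - 2) / 2 :=
      (prod_ball_iff' hn v x.1).mp x.2
    show sqGrid.dist w (w.1 + (x.1.1 - v.1), w.2 + ((x.1.2 - v.2).valMinAbs)) ≤ (n - 2) / 2
    rw [grid_ball_iff]
    show (w.1 + (x.1.1 - v.1) - w.1).natAbs
      + (w.2 + (x.1.2 - v.2).valMinAbs - w.2).natAbs ≤ (n - 2) / 2
    have e1 : w.1 + (x.1.1 - v.1) - w.1 = x.1.1 - v.1 := by ring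
    have e2 : w.2 + (x.1.2 - v.2).valMinAbs - w.2 = (x.1.2 - v.2).valMinAbs := by ring
    rw [e1, e2]
    exact hx
  · -- membership of backward image
    have hy : (y.1.1 - w.1).natAbs + (y.1.2 - w.2).natAbs ≤ (n - 2) / 2 :=
      (grid_ball_iff _ w y.1).mp y.2
    show (intPath.boxProd (cycleGraph n)).dist v
      (v.1 + (y.1.1 - w.1), v.2 + ((y.1.2 - w.2 : ℤ) : ZMod n)) ≤ (n - 2) / 2
    rw [prod_ball_iff hn]
    refine ⟨y.1.2 - w.2, ?_, ?_⟩
    · show ((y.1.2 - w.2 : ℤ) : ZMod n)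
        = (v.2 + ((y.1.2 - w.2 : ℤ) : ZMod n)) - v.2
      ring
    · show (v.1 + (y.1.1 - w.1) - v.1).natAbs + (y.1.2 - w.2).natAbs ≤ (n - 2) / 2
      have e1 : v.1 + (y.1.1 - w.1) - v.1 = y.1.1 - w.1 := by ring
      rw [e1]
      exact hy
  · -- left inverse
    rintro ⟨⟨x1, x2⟩, hx⟩
    apply Subtype.ext
    refine Prod.ext ?_ ?_
    · show v.1 + (w.1 + (x1 - v.1) - w.1) = x1
      ring
    · show v.2 + ((w.2 + (x2 - v.2).valMinAbs - w.2 : ℤ) : ZMod n) = x2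
      have e2 : w.2 + (x2 - v.2).valMinAbs - w.2 = (x2 - v.2).valMinAbs := by ring
      rw [e2, ZMod.coe_valMinAbs]
      ring
  · -- right inverse
    rintro ⟨⟨y1, y2⟩, hy⟩
    have hy' : (y1 - w.1).natAbs + (y2 - w.2).natAbs ≤ (n - 2) / 2 :=
      (grid_ball_iff _ w (y1, y2)).mp hy
    apply Subtype.ext
    refine Prod.ext ?_ ?_
    · show w.1 + (v.1 + (y1 - w.1) - v.1) = y1
      ring
    · show w.2 + ((v.2 + ((y2 - w.2 : ℤ) : ZMod n) - v.2).valMinAbs) = y2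
      have e2 : v.2 + ((y2 - w.2 : ℤ) : ZMod n) - v.2 = ((y2 - w.2 : ℤ) : ZMod n) := by
        ring
      rw [e2, valMinAbs_intCast_eq (by omega)]
      ring
  · -- adjacency
    intro a b
    obtain ⟨⟨x1, x2⟩, hx⟩ := a
    obtain ⟨⟨x1', x2'⟩, hx'⟩ := b
    have hbx : (x1 - v.1).natAbs + ((x2 - v.2).valMinAbs).natAbs ≤ (n - 2) / 2 :=
      (prod_ball_iff' hn v (x1, x2)).mp hx
    have hbx' : (x1' - v.1).natAbs + ((x2' - v.2).valMinAbs).natAbs ≤ (n - 2) / 2 :=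
      (prod_ball_iff' hn v (x1', x2')).mp hx'
    show sqGrid.Adj (w.1 + (x1 - v.1), w.2 + (x2 - v.2).valMinAbs)
        (w.1 + (x1' - v.1), w.2 + (x2' - v.2).valMinAbs) ↔
      (intPath.boxProd (cycleGraph n)).Adj (x1, x2) (x1', x2')
    exact adj_helper hn (by omega) (by omega)

end Firefight
end
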